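/- For a phantom system {f_0,...,f_n} as above, the sum over alternatives of the median of the votes and phantoms at a fixed time t is a non-decreasing function of t; consequently, although the normalization time t* may not be unique, the resulting vector of medians at any normalization time is unique. -/

import Mathlib

/-- The median of `2n+1` real numbers: the `(n+1)`-st smallest. -/
noncomputable def medianR (n : ℕ) (v : Fin (2*n+1) → ℝ) : ℝ :=
  (Multiset.sort (Multiset.map v Finset.univ.val) (· ≤ ·)).getD n 0

/-- Merge `n` votes and `n+1` phantoms into one vector of `2n+1` values. -/
def mergeVR (n : ℕ) (x : Fin n → ℝ) (y : Fin (n+1) → ℝ) : Fin (2*n+1) → ℝ :=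
  fun i => if h : (i : ℕ) < n then x ⟨i, h⟩
           else y ⟨(i : ℕ) - n, by have := i.isLt; omega⟩

lemma sorted_getD_le_iff (l : List ℝ) (hl : l.Pairwise (· ≤ ·)) (x : ℝ) (k : ℕ)
    (hk : k < l.length) :
    l.getD k 0 ≤ x ↔ k < l.countP (fun a => decide (a ≤ x)) := by
  constructor
  · intro h
    have htake : (l.take (k+1)).countP (fun a => decide (a ≤ x)) = k + 1 := by
      rw [List.countP_eq_length.mpr, List.length_take]
      · omega
      · intro a ha
        simp only [decide_eq_true_eq]
        obtain ⟨i, hi, rfl⟩ := List.mem_iff_getElem.mp ha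
        have hi' : i < l.length := by
          have := List.length_take_le (k+1) l; omega
        rw [List.getElem_take]
        have : l[i] ≤ l[k] := by
          apply hl.rel_get_of_le
          simp only [Fin.mk_le_mk]
          have := hi; simp [List.length_take] at this; omega
        calc l[i] ≤ l[k] := this
          _ ≤ x := by rwa [List.getD_eq_getElem] at h
    have := (List.take_sublist (k+1) l).countP_le (p := fun a => decide (a ≤ x))
    omega
  · intro h
    by_contra hgt
    push_neg at hgt
    have hdrop : (l.drop k).countP (fun a => decide (a ≤ x)) = 0 := by
      rw [List.countP_eq_zero]
      intro a ha
      simp only [decide_eq_true_eq, not_le]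
      obtain ⟨i, hi, rfl⟩ := List.mem_iff_getElem.mp ha
      have hi' : k + i < l.length := by rw [List.length_drop] at hi; omega
      rw [List.getElem_drop]
      have : l[k] ≤ l[k+i]'hi' := by
        apply hl.rel_get_of_le
        simp
      calc x < l[k] := by rwa [List.getD_eq_getElem] at hgt
        _ ≤ l[k+i]'hi' := this
    have hsplit := List.take_append_drop k l
    have : l.countP (fun a => decide (a ≤ x)) =
        (l.take k).countP (fun a => decide (a ≤ x)) + (l.drop k).countP (fun a => decide (a ≤ x)) := by
      conv_lhs => rw [← hsplit]
      rw [List.countP_append]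
    have hle := (l.take k).countP_le_length (p := fun a => decide (a ≤ x))
    rw [List.length_take] at hle
    omega

lemma medianR_mono (n : ℕ) (v w : Fin (2*n+1) → ℝ) (h : ∀ i, v i ≤ w i) :
    medianR n v ≤ medianR n w := by
  classical
  unfold medianR
  set lv := Multiset.sort (Multiset.map v Finset.univ.val) (· ≤ ·) with hlv
  set lw := Multiset.sort (Multiset.map w Finset.univ.val) (· ≤ ·) with hlw
  have hlenv : lv.length = 2*n+1 := by
    simp [hlv, Multiset.length_sort]
  have hlenw : lw.length = 2*n+1 := by
    simp [hlw, Multiset.length_sort]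
  have hsv : lv.Pairwise (· ≤ ·) := Multiset.pairwise_sort _ _
  have hsw : lw.Pairwise (· ≤ ·) := Multiset.pairwise_sort _ _
  set x := lw.getD n 0 with hx
  have h1 : n < lw.countP (fun a => decide (a ≤ x)) :=
    (sorted_getD_le_iff lw hsw x n (by omega)).mp le_rfl
  have hcount : ∀ (u : Fin (2*n+1) → ℝ),
      (Multiset.sort (Multiset.map u Finset.univ.val) (· ≤ ·)).countP
        (fun a => decide (a ≤ x))
      = (Finset.univ.filter (fun i => u i ≤ x)).card := by
    intro u
    rw [← Multiset.coe_countP, Multiset.sort_eq, Multiset.countP_map]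
    rfl
  have h2 : lw.countP (fun a => decide (a ≤ x)) ≤ lv.countP (fun a => decide (a ≤ x)) := by
    rw [hlv, hlw, hcount, hcount]
    apply Finset.card_le_card
    intro i hi
    simp only [Finset.mem_filter, Finset.mem_univ, true_and] at hi ⊢
    exact le_trans (h i) hi
  exact (sorted_getD_le_iff lv hsv x n (by omega)).mpr (by omega)

/-- The sum of medians is non-decreasing in time, and the vector of medians
at any normalization time is unique. -/
theorem stmt3 (n m b : ℕ) (hn : 0 < n) (hm : 2 ≤ m) (hb : 0 < b)
    (p : Fin n → Fin m → ℝ)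
    (hp1 : ∀ i j, 0 ≤ p i j ∧ p i j ≤ b)
    (hp2 : ∀ i, ∑ j, p i j = b)
    (f : Fin (n+1) → ℝ → ℝ)
    (hcont : ∀ k, ContinuousOn (f k) (Set.Icc 0 1))
    (hmono : ∀ k, MonotoneOn (f k) (Set.Icc 0 1))
    (hrange : ∀ k, ∀ t ∈ Set.Icc (0:ℝ) 1, f k t ∈ Set.Icc (0:ℝ) b)
    (h0 : ∀ k, f k 0 = 0)
    (h1 : ∀ k : Fin (n+1), (b : ℝ) * ((n : ℝ) - (k : ℕ)) / n ≤ f k 1)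
    (M : ℝ → Fin m → ℝ)
    (hM : ∀ t j, M t j = medianR n (mergeVR n (fun i => p i j) (fun k => f k t))) :
    (∀ t ∈ Set.Icc (0:ℝ) 1, ∀ t' ∈ Set.Icc (0:ℝ) 1, t ≤ t' →
        ∑ j, M t j ≤ ∑ j, M t' j) ∧
    (∀ t1 ∈ Set.Icc (0:ℝ) 1, ∀ t2 ∈ Set.Icc (0:ℝ) 1,
        ∑ j, M t1 j = b → ∑ j, M t2 j = b → ∀ j, M t1 j = M t2 j) := by
  have key : ∀ t ∈ Set.Icc (0:ℝ) 1, ∀ t' ∈ Set.Icc (0:ℝ) 1, t ≤ t' →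
      ∀ j, M t j ≤ M t' j := by
    intro t ht t' ht' htt' j
    rw [hM, hM]
    apply medianR_mono
    intro i
    unfold mergeVR
    by_cases hi : (i : ℕ) < n
    · simp [hi]
    · simp only [hi, dite_false]
      exact hmono _ ht ht' htt'
  constructor
  · intro t ht t' ht' htt'
    exact Finset.sum_le_sum fun j _ => key t ht t' ht' htt' j
  · intro t1 ht1 t2 ht2 hs1 hs2 j
    rcases le_total t1 t2 with hle | hle
    · have hk := key t1 ht1 t2 ht2 hle
      exact (Finset.sum_eq_sum_iff_of_le (fun j _ => hk j)).mp (hs1.trans hs2.symm) j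
        (Finset.mem_univ j)
    · have hk := key t2 ht2 t1 ht1 hle
      exact ((Finset.sum_eq_sum_iff_of_le (fun j _ => hk j)).mp (hs2.trans hs1.symm) j
        (Finset.mem_univ j)).symm
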